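/- Let k, ℓ be nonzero integers with |k| = |ℓ|. Then the function α(s) = 2s satisfies, for every s ∈ (0, π/2), the reduced σ₂-criticality ODE: [α″(s)·sin α(s) + α′(s)²·cos α(s)]·(k²/cos²s + ℓ²/sin²s) + α′(s)·sin α(s)·(k²/(sin s · cos³s) − ℓ²/(cos s · sin³s)) = 0, together with the boundary conditions α(0) = 0 and α(π/2) = π. -/

import Mathlib

open Real Set

/-- For nonzero integers `k, l` with `|k| = |l|`, the function `α(s) = 2s`
satisfies the reduced σ₂-criticality ODE on `(0, π/2)` together with the boundary
conditions `α(0) = 0` and `α(π/2) = π`. -/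
theorem stmt_1 (k l : ℤ) (hk : k ≠ 0) (hl : l ≠ 0) (hkl : |k| = |l|)
    (α : ℝ → ℝ) (hα : α = fun s => 2 * s) :
    α 0 = 0 ∧ α (π/2) = π ∧
    ∀ s ∈ Ioo 0 (π/2),
      (deriv (deriv α) s * sin (α s) + (deriv α s)^2 * cos (α s)) *
        ((k : ℝ)^2 / cos s ^ 2 + (l : ℝ)^2 / sin s ^ 2) +
      deriv α s * sin (α s) *
        ((k : ℝ)^2 / (sin s * cos s ^ 3) - (l : ℝ)^2 / (cos s * sin s ^ 3)) = 0 := by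
  subst hα
  have hd : deriv (fun s : ℝ => 2 * s) = fun _ => (2:ℝ) := by
    ext s; simpa using ((hasDerivAt_id s).const_mul 2).deriv
  refine ⟨by norm_num, by ring, ?_⟩
  intro s hs
  have hs0 : sin s ≠ 0 := ne_of_gt (sin_pos_of_pos_of_lt_pi hs.1 (by linarith [hs.2, pi_pos]))
  have hc0 : cos s ≠ 0 := ne_of_gt (cos_pos_of_mem_Ioo ⟨by linarith [hs.1, pi_pos], hs.2⟩)
  have hkl2 : (k:ℝ)^2 = (l:ℝ)^2 := by
    have := congrArg (fun x : ℤ => ((x:ℝ))^2) hkl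
    simpa [sq_abs] using this
  rw [hd]
  simp only [deriv_const, sin_two_mul, cos_two_mul, hkl2]
  have hsc := sin_sq_add_cos_sq s
  field_simp
  linear_combination (8 * (l:ℝ)^2 * cos s ^ 2) * hsc
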